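/- arXiv:1608.06340 — 6 statements merged into one kernel-verified Lean document; each statement's English description precedes it below -/
import Mathlib

section
/- Let (M, μ, η) be a monad on a category C. Then M is separable if and only if the counit ε of the Eilenberg–Moore adjunction F_M ⊣ U_M admits a section, i.e. there exists a natural transformation ξ : 1_{M-Alg} ⟶ U_M ⋙ F_M such that ε ∘ ξ is the identity natural transformation of 1_{M-Alg}. -/
open CategoryTheory

universe v u

variable {C : Type u} [Category.{v} C]

/-- a monad `M` is separable (i.e. `μ` admits a section `σ` with
`Mμ ∘ σM = σ ∘ μ = μM ∘ Mσ`) if and only if the counit of the Eilenberg–Moore adjunction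
`F_M ⊣ U_M` admits a section. -/
theorem separable_iff_counit_section (M : CategoryTheory.Monad C) :
    (∃ σ : M.toFunctor ⟶ M.toFunctor ⋙ M.toFunctor,
      (∀ X : C, σ.app X ≫ M.μ.app X = 𝟙 (M.toFunctor.obj X)) ∧
      (∀ X : C, σ.app (M.toFunctor.obj X) ≫ M.toFunctor.map (M.μ.app X) =
        M.μ.app X ≫ σ.app X) ∧
      (∀ X : C, M.toFunctor.map (σ.app X) ≫ M.μ.app (M.toFunctor.obj X) =
        M.μ.app X ≫ σ.app X)) ↔
    (∃ ξ : 𝟭 M.Algebra ⟶ M.forget ⋙ M.free, ξ ≫ M.adj.counit = 𝟙 (𝟭 M.Algebra)) := by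
  constructor
  · rintro ⟨σ, h1, h2, h3⟩
    refine ⟨{ app := fun A => { f := M.η.app A.A ≫ σ.app A.A ≫ M.map A.a, h := ?_ },
              naturality := ?_ }, ?_⟩
    · -- algebra morphism condition
      dsimp
      change M.map (M.η.app A.A ≫ σ.app A.A ≫ M.map A.a) ≫ M.μ.app A.A = A.a ≫ M.η.app A.A ≫ σ.app A.A ≫ M.map A.a
      simp only [Functor.map_comp, Category.assoc]
      rw [← Functor.comp_map, M.μ.naturality, reassoc_of% h3]
      erw [Monad.right_unit_assoc]
      erw [M.η.naturality_assoc A.a]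
      erw [σ.naturality_assoc A.a]
      dsimp
      rw [← Functor.map_comp, ← A.assoc, Functor.map_comp, reassoc_of% h2]
      erw [Monad.left_unit_assoc]
    · -- naturality
      intro A B g
      ext
      dsimp
      erw [M.η.naturality_assoc g.f]
      erw [σ.naturality_assoc g.f]
      dsimp
      change M.η.app A.A ≫ σ.app A.A ≫ M.map (M.map g.f) ≫ M.map B.a = (M.η.app A.A ≫ σ.app A.A ≫ M.map A.a) ≫ M.map g.f
      rw [← Functor.map_comp, g.h, Functor.map_comp]
      simp only [Category.assoc]
    · -- section property
      ext A
      dsimp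
      simp only [Monad.adj_counit, Functor.map_id, Category.id_comp]
      change (M.η.app A.A ≫ σ.app A.A ≫ M.map A.a) ≫ A.a = 𝟙 A.A
      simp only [Category.assoc]
      rw [← A.assoc, reassoc_of% h1, A.unit]
  · rintro ⟨ξ, hξ⟩
    have hcomp : ∀ A : M.Algebra, (ξ.app A).f ≫ A.a = 𝟙 A.A := by
      intro A
      have := congrArg (fun t => (t.app A).f) hξ
      simp at this
      exact this
    refine ⟨{ app := fun X => (ξ.app (M.free.obj X)).f, naturality := ?_ }, ?_, ?_, ?_⟩
    · intro X Y f
      have := congrArg Monad.Algebra.Hom.f (ξ.naturality (M.free.map f))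
      simp at this
      exact this
    · intro X
      exact hcomp (M.free.obj X)
    · intro X
      have := congrArg Monad.Algebra.Hom.f (ξ.naturality (M.adj.counit.app (M.free.obj X)))
      simp at this
      exact this.symm
    · intro X
      exact (ξ.app (M.free.obj X)).h
end

section
/- Let (M, μ, η) be a monad on a category C with separability section σ : M ⟶ M ∘ M. For each M-algebra (X, λ) define ξ_{(X,λ)} := (Mλ) ∘ σ_X ∘ η_X : X → M X. Then: (i) ξ_{(X,λ)} is a morphism of M-algebras (X, λ) → (M X, μ_X); (ii) the ξ_{(X,λ)} assemble into a natural transformation ξ : 1_{M-Alg} ⟶ U_M ⋙ F_M; (iii) λ ∘ ξ_{(X,λ)} = id_X for every M-algebra (X, λ), i.e. ξ is a section of the counit of the Eilenberg–Moore adjunction. -/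
open CategoryTheory

universe v u

variable {C : Type u} [Category.{v} C]

lemma sep_hom_aux (M : CategoryTheory.Monad C)
    (σ : M.toFunctor ⟶ M.toFunctor ⋙ M.toFunctor)
    (hσl : ∀ X : C, σ.app (M.toFunctor.obj X) ≫ M.toFunctor.map (M.μ.app X) =
      M.μ.app X ≫ σ.app X)
    (hσr : ∀ X : C, M.toFunctor.map (σ.app X) ≫ M.μ.app (M.toFunctor.obj X) =
      M.μ.app X ≫ σ.app X) (A : M.Algebra) :
    M.toFunctor.map (M.η.app A.A ≫ σ.app A.A ≫ M.toFunctor.map A.a) ≫ M.μ.app A.A =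
      A.a ≫ (M.η.app A.A ≫ σ.app A.A ≫ M.toFunctor.map A.a) := by
  have hμ : M.toFunctor.map (M.toFunctor.map A.a) ≫ M.μ.app A.A =
      M.μ.app (M.toFunctor.obj A.A) ≫ M.toFunctor.map A.a := M.μ.naturality A.a
  have hη : M.η.app (M.toFunctor.obj A.A) ≫ M.toFunctor.map A.a = A.a ≫ M.η.app A.A := by
    simpa using (M.η.naturality A.a).symm
  have hσnat : M.toFunctor.map A.a ≫ σ.app A.A =
      σ.app (M.toFunctor.obj A.A) ≫ M.toFunctor.map (M.toFunctor.map A.a) := by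
    exact σ.naturality A.a
  have lhs : M.toFunctor.map (M.η.app A.A ≫ σ.app A.A ≫ M.toFunctor.map A.a) ≫ M.μ.app A.A
      = σ.app A.A ≫ M.toFunctor.map A.a := by
    simp only [Functor.map_comp, Category.assoc]
    rw [hμ, ← Category.assoc (M.toFunctor.map (σ.app A.A)), hσr]
    simp
  have rhs : A.a ≫ (M.η.app A.A ≫ σ.app A.A ≫ M.toFunctor.map A.a)
      = σ.app A.A ≫ M.toFunctor.map A.a := by
    rw [← Category.assoc, ← hη, Category.assoc, ← Category.assoc (M.toFunctor.map A.a), hσnat,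
      Category.assoc, ← Functor.map_comp, ← A.assoc, Functor.map_comp,
      ← Category.assoc (σ.app (M.toFunctor.obj A.A)), hσl]
    simp
  rw [lhs, rhs]

lemma sep_counit_aux (M : CategoryTheory.Monad C)
    (σ : M.toFunctor ⟶ M.toFunctor ⋙ M.toFunctor)
    (hσ : ∀ X : C, σ.app X ≫ M.μ.app X = 𝟙 (M.toFunctor.obj X)) (A : M.Algebra) :
    (M.η.app A.A ≫ σ.app A.A ≫ M.toFunctor.map A.a) ≫ A.a = 𝟙 A.A := by
  rw [Category.assoc, Category.assoc, ← A.assoc, ← Category.assoc (σ.app A.A), hσ,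
    Category.id_comp, A.unit]

/-- if `σ` is a separability section of a monad `M`, then for each `M`-algebra
`(X, λ)` the morphism `ξ_{(X,λ)} = (Mλ) ∘ σ_X ∘ η_X` is a morphism of `M`-algebras
`(X, λ) → (M X, μ_X)`, these assemble into a natural transformation
`ξ : 𝟭 ⟶ U_M ⋙ F_M`, and `ξ` is a section of the counit of the Eilenberg–Moore adjunction. -/
theorem separability_section_induces_counit_section (M : CategoryTheory.Monad C)
    (σ : M.toFunctor ⟶ M.toFunctor ⋙ M.toFunctor)
    (hσ : ∀ X : C, σ.app X ≫ M.μ.app X = 𝟙 (M.toFunctor.obj X))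
    (hσl : ∀ X : C, σ.app (M.toFunctor.obj X) ≫ M.toFunctor.map (M.μ.app X) =
      M.μ.app X ≫ σ.app X)
    (hσr : ∀ X : C, M.toFunctor.map (σ.app X) ≫ M.μ.app (M.toFunctor.obj X) =
      M.μ.app X ≫ σ.app X) :
    -- (i) `ξ_{(X,λ)}` is a morphism of `M`-algebras `(X, λ) → (M X, μ_X)`
    (∀ A : M.Algebra,
      M.toFunctor.map (M.η.app A.A ≫ σ.app A.A ≫ M.toFunctor.map A.a) ≫ M.μ.app A.A =
        A.a ≫ (M.η.app A.A ≫ σ.app A.A ≫ M.toFunctor.map A.a)) ∧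
    -- (ii) these assemble into a natural transformation `ξ : 𝟭 ⟶ U_M ⋙ F_M`
    (∃ ξ : 𝟭 M.Algebra ⟶ M.forget ⋙ M.free,
      ∀ A : M.Algebra, (ξ.app A).f = M.η.app A.A ≫ σ.app A.A ≫ M.toFunctor.map A.a) ∧
    -- (iii) `ξ` is a section of the counit: `λ ∘ ξ_{(X,λ)} = id`
    (∀ A : M.Algebra,
      (M.η.app A.A ≫ σ.app A.A ≫ M.toFunctor.map A.a) ≫ A.a = 𝟙 A.A) := by
  refine ⟨fun A => sep_hom_aux M σ hσl hσr A,
    ⟨{ app := fun A => ⟨M.η.app A.A ≫ σ.app A.A ≫ M.toFunctor.map A.a,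
         sep_hom_aux M σ hσl hσr A⟩
       naturality := fun A B f => ?_ }, fun A => rfl⟩,
    fun A => sep_counit_aux M σ hσ A⟩
  ext
  show f.f ≫ M.η.app B.A ≫ σ.app B.A ≫ M.toFunctor.map B.a =
    (M.η.app A.A ≫ σ.app A.A ≫ M.toFunctor.map A.a) ≫ M.toFunctor.map f.f
  have hη : f.f ≫ M.η.app B.A = M.η.app A.A ≫ M.toFunctor.map f.f := by
    simpa using M.η.naturality f.f
  have hσnat : M.toFunctor.map f.f ≫ σ.app B.A =
      σ.app A.A ≫ M.toFunctor.map (M.toFunctor.map f.f) := by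
    exact σ.naturality f.f
  have hf : M.toFunctor.map f.f ≫ B.a = A.a ≫ f.f := f.h
  rw [← Category.assoc, hη, Category.assoc, ← Category.assoc (M.toFunctor.map f.f), hσnat,
    Category.assoc, ← Functor.map_comp, hf, Functor.map_comp]
  simp
end

section
/- Let (M, μ, η) be a monad on a category C and suppose ξ : 1_{M-Alg} ⟶ U_M ⋙ F_M is a natural transformation with ε ∘ ξ = id, where ε is the counit of the Eilenberg–Moore adjunction. Define σ : M ⟶ M ∘ M by σ_X := U_M(ξ_{(M X, μ_X)}) : M X → M² X, the component of ξ at the free algebra on X. Then σ is a separability section for M: it is natural, μ ∘ σ = id_M, and (Mμ) ∘ (σM) = σ ∘ μ = (μM) ∘ (Mσ). -/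
open CategoryTheory

universe v u

variable {C : Type u} [Category.{v} C]

/-- if the counit of the Eilenberg–Moore adjunction of a monad `M` admits a
section `ξ`, then `σ_X := U_M(ξ_{(M X, μ_X)})`, the component of `ξ` at free algebras, is a
separability section for `M`: it is natural, a section of `μ`, and satisfies
`(Mμ) ∘ (σM) = σ ∘ μ = (μM) ∘ (Mσ)`. -/
theorem counit_section_induces_separability_section (M : CategoryTheory.Monad C)
    (ξ : 𝟭 M.Algebra ⟶ M.forget ⋙ M.free)
    (hξ : ξ ≫ M.adj.counit = 𝟙 (𝟭 M.Algebra)) :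
    ∃ σ : M.toFunctor ⟶ M.toFunctor ⋙ M.toFunctor,
      (∀ X : C, σ.app X = (ξ.app (M.free.obj X)).f) ∧
      (∀ X : C, σ.app X ≫ M.μ.app X = 𝟙 (M.toFunctor.obj X)) ∧
      (∀ X : C, σ.app (M.toFunctor.obj X) ≫ M.toFunctor.map (M.μ.app X) =
        M.μ.app X ≫ σ.app X) ∧
      (∀ X : C, M.toFunctor.map (σ.app X) ≫ M.μ.app (M.toFunctor.obj X) =
        M.μ.app X ≫ σ.app X) := by
  refine ⟨{ app := fun X => (ξ.app (M.free.obj X)).f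
            naturality := fun X Y g => ?_ }, fun X => rfl, fun X => ?_, fun X => ?_, fun X => ?_⟩
  · have h := ξ.naturality (M.free.map g)
    have := congrArg Monad.Algebra.Hom.f h
    exact this
  · have h := congrArg (fun t : 𝟭 M.Algebra ⟶ 𝟭 M.Algebra => (t.app (M.free.obj X)).f) hξ
    simp at h
    exact h
  · -- naturality of ξ at the counit map ε_{free X} : free (M X) ⟶ free X, whose f is μ_X
    have h := ξ.naturality (M.adj.counit.app (M.free.obj X))
    have := congrArg Monad.Algebra.Hom.f h
    simp at this
    exact this.symm
  · -- ξ.app (free X) is an algebra hom: M σ_X ≫ μ_{MX} = μ_X ≫ σ_X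
    have h := (ξ.app (M.free.obj X)).h
    exact h
end

section
/- Let (F, φ) : (C, M) → (C', M') be a strong monadic functor between categories with monads, and write ψ := φ⁻¹ : F ∘ M ⟶ M' ∘ F. Let σ and σ' be separability sections for M and M' respectively, compatible with ψ in the sense that (M'ψ) ∘ (ψM) ∘ (Fσ) = (σ'F) ∘ ψ, i.e. for all X: M'ψ_X ∘ ψ_{M X} ∘ F(σ_X) = σ'_{F X} ∘ ψ_X. Let ξ and ξ' be the induced sections of the Eilenberg–Moore counits, given by ξ_{(X,λ)} = (Mλ) ∘ σ_X ∘ η_X and ξ'_{(Y,ρ)} = (M'ρ) ∘ σ'_Y ∘ η'_Y. Then for every M-algebra (X, λ): ψ_X ∘ F(ξ_{(X,λ)}) = ξ'_{Mod(F,φ)(X,λ)} as morphisms F X → M'(F X). -/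
open CategoryTheory

universe v₁ v₂ u₁ u₂

variable {C : Type u₁} [Category.{v₁} C] {D : Type u₂} [Category.{v₂} D]

/-- A lax monadic functor `(F, φ) : (C, M) → (D, M')` between categories equipped with monads:
a functor `F : C ⥤ D` together with a natural transformation `φ : M' ∘ F ⟶ F ∘ M`
compatible with the multiplications and units of the two monads. -/
structure MonadicStr (M : CategoryTheory.Monad C) (M' : CategoryTheory.Monad D) (F : C ⥤ D) where
  φ : F ⋙ M'.toFunctor ⟶ M.toFunctor ⋙ F
  lax_unit : ∀ X : C, M'.η.app (F.obj X) ≫ φ.app X = F.map (M.η.app X)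
  lax_assoc : ∀ X : C, M'.μ.app (F.obj X) ≫ φ.app X =
    M'.toFunctor.map (φ.app X) ≫ φ.app (M.toFunctor.obj X) ≫ F.map (M.μ.app X)

namespace MonadicStr

variable {M : CategoryTheory.Monad C} {M' : CategoryTheory.Monad D} {F : C ⥤ D}

/-- The induced functor `Mod(F, φ)` between Eilenberg-Moore categories, sending an `M`-algebra
`(X, λ)` to the `M'`-algebra `(F X, F λ ∘ φ_X)` and an algebra morphism `f` to `F f`. -/
def Mod (S : MonadicStr M M' F) : M.Algebra ⥤ M'.Algebra where
  obj A :=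
    { A := F.obj A.A
      a := S.φ.app A.A ≫ F.map A.a
      unit := by
        rw [← Category.assoc, S.lax_unit, ← F.map_comp, A.unit]
        simp
      assoc := by
        have h1 : M'.toFunctor.map (F.map A.a) ≫ S.φ.app A.A
            = S.φ.app (M.toFunctor.obj A.A) ≫ F.map (M.toFunctor.map A.a) :=
          S.φ.naturality A.a
        have h2 : M.μ.app A.A ≫ A.a = M.toFunctor.map A.a ≫ A.a := A.assoc
        calc M'.μ.app (F.obj A.A) ≫ S.φ.app A.A ≫ F.map A.a
            = (M'.μ.app (F.obj A.A) ≫ S.φ.app A.A) ≫ F.map A.a := by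
              rw [Category.assoc]
          _ = (M'.toFunctor.map (S.φ.app A.A) ≫ S.φ.app (M.toFunctor.obj A.A)
                ≫ F.map (M.μ.app A.A)) ≫ F.map A.a := by rw [S.lax_assoc]
          _ = M'.toFunctor.map (S.φ.app A.A) ≫ S.φ.app (M.toFunctor.obj A.A)
                ≫ F.map (M.μ.app A.A ≫ A.a) := by simp [Category.assoc]
          _ = M'.toFunctor.map (S.φ.app A.A) ≫ S.φ.app (M.toFunctor.obj A.A)
                ≫ F.map (M.toFunctor.map A.a ≫ A.a) := by rw [h2]
          _ = M'.toFunctor.map (S.φ.app A.A) ≫ (S.φ.app (M.toFunctor.obj A.A)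
                ≫ F.map (M.toFunctor.map A.a)) ≫ F.map A.a := by simp [Category.assoc]
          _ = M'.toFunctor.map (S.φ.app A.A) ≫ (M'.toFunctor.map (F.map A.a)
                ≫ S.φ.app A.A) ≫ F.map A.a := by rw [h1]
          _ = M'.toFunctor.map (S.φ.app A.A ≫ F.map A.a) ≫ S.φ.app A.A ≫ F.map A.a := by
              simp [Category.assoc] }
  map {A B} f :=
    { f := F.map f.f
      h := by
        have h1 : M'.toFunctor.map (F.map f.f) ≫ S.φ.app B.A
            = S.φ.app A.A ≫ F.map (M.toFunctor.map f.f) :=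
          S.φ.naturality f.f
        have h2 : M.toFunctor.map f.f ≫ B.a = A.a ≫ f.f := f.h
        calc M'.toFunctor.map (F.map f.f) ≫ S.φ.app B.A ≫ F.map B.a
            = (M'.toFunctor.map (F.map f.f) ≫ S.φ.app B.A) ≫ F.map B.a := by
              rw [Category.assoc]
          _ = (S.φ.app A.A ≫ F.map (M.toFunctor.map f.f)) ≫ F.map B.a := by rw [h1]
          _ = S.φ.app A.A ≫ F.map (M.toFunctor.map f.f ≫ B.a) := by
              rw [Category.assoc, F.map_comp]
          _ = S.φ.app A.A ≫ F.map (A.a ≫ f.f) := by rw [h2]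
          _ = (S.φ.app A.A ≫ F.map A.a) ≫ F.map f.f := by
              rw [F.map_comp, Category.assoc] }
  map_id A := by
    apply Monad.Algebra.Hom.ext
    simp
  map_comp f g := by
    apply Monad.Algebra.Hom.ext
    simp

end MonadicStr

/-- for a strong monadic functor `(F, φ)` with `ψ := φ⁻¹`, and compatible
separability sections `σ`, `σ'` of `M`, `M'`, the induced sections `ξ`, `ξ'` of the
Eilenberg–Moore counits satisfy `ψ_X ∘ F(ξ_{(X,λ)}) = ξ'_{Mod(F,φ)(X,λ)}`. -/
theorem compatible_sections (M : CategoryTheory.Monad C) (M' : CategoryTheory.Monad D)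
    (F : C ⥤ D) (S : MonadicStr M M' F)
    (ψ : M.toFunctor ⋙ F ⟶ F ⋙ M'.toFunctor)
    (hψ₁ : S.φ ≫ ψ = 𝟙 (F ⋙ M'.toFunctor))
    (hψ₂ : ψ ≫ S.φ = 𝟙 (M.toFunctor ⋙ F))
    (σ : M.toFunctor ⟶ M.toFunctor ⋙ M.toFunctor)
    (hσ : ∀ X : C, σ.app X ≫ M.μ.app X = 𝟙 (M.toFunctor.obj X))
    (hσl : ∀ X : C, σ.app (M.toFunctor.obj X) ≫ M.toFunctor.map (M.μ.app X) =
      M.μ.app X ≫ σ.app X)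
    (hσr : ∀ X : C, M.toFunctor.map (σ.app X) ≫ M.μ.app (M.toFunctor.obj X) =
      M.μ.app X ≫ σ.app X)
    (σ' : M'.toFunctor ⟶ M'.toFunctor ⋙ M'.toFunctor)
    (hσ' : ∀ Y : D, σ'.app Y ≫ M'.μ.app Y = 𝟙 (M'.toFunctor.obj Y))
    (hσ'l : ∀ Y : D, σ'.app (M'.toFunctor.obj Y) ≫ M'.toFunctor.map (M'.μ.app Y) =
      M'.μ.app Y ≫ σ'.app Y)
    (hσ'r : ∀ Y : D, M'.toFunctor.map (σ'.app Y) ≫ M'.μ.app (M'.toFunctor.obj Y) =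
      M'.μ.app Y ≫ σ'.app Y)
    (hcompat : ∀ X : C,
      F.map (σ.app X) ≫ ψ.app (M.toFunctor.obj X) ≫ M'.toFunctor.map (ψ.app X) =
        ψ.app X ≫ σ'.app (F.obj X)) :
    ∀ A : M.Algebra,
      F.map (M.η.app A.A ≫ σ.app A.A ≫ M.toFunctor.map A.a) ≫ ψ.app A.A =
        M'.η.app (F.obj A.A) ≫ σ'.app (F.obj A.A) ≫
          M'.toFunctor.map (S.φ.app A.A ≫ F.map A.a) := by
  intro A
  have h2 : ψ.app A.A ≫ S.φ.app A.A = 𝟙 _ := by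
    have := NatTrans.congr_app hψ₂ A.A; simpa using this
  have h3 : S.φ.app A.A ≫ ψ.app A.A = 𝟙 _ := by
    have := NatTrans.congr_app hψ₁ A.A; simpa using this
  have h5 : F.map (M.η.app A.A) ≫ ψ.app A.A = M'.η.app (F.obj A.A) := by
    rw [← S.lax_unit, Category.assoc, h3]; simp
  have hnat : F.map (M.toFunctor.map A.a) ≫ ψ.app A.A =
      ψ.app (M.toFunctor.obj A.A) ≫ M'.toFunctor.map (F.map A.a) := ψ.naturality A.a
  have h6 : F.map (σ.app A.A) ≫ ψ.app (M.toFunctor.obj A.A) =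
      ψ.app A.A ≫ σ'.app (F.obj A.A) ≫ M'.toFunctor.map (S.φ.app A.A) := by
    have := hcompat A.A
    calc F.map (σ.app A.A) ≫ ψ.app (M.toFunctor.obj A.A)
        = (F.map (σ.app A.A) ≫ ψ.app (M.toFunctor.obj A.A) ≫
            M'.toFunctor.map (ψ.app A.A)) ≫ M'.toFunctor.map (S.φ.app A.A) := by
          simp only [Category.assoc, ← M'.toFunctor.map_comp, h2]
          simp
      _ = (ψ.app A.A ≫ σ'.app (F.obj A.A)) ≫ M'.toFunctor.map (S.φ.app A.A) := by rw [this]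
      _ = _ := by simp [Category.assoc]
  calc F.map (M.η.app A.A ≫ σ.app A.A ≫ M.toFunctor.map A.a) ≫ ψ.app A.A
      = F.map (M.η.app A.A) ≫ F.map (σ.app A.A) ≫
          (F.map (M.toFunctor.map A.a) ≫ ψ.app A.A) := by simp
    _ = F.map (M.η.app A.A) ≫ (F.map (σ.app A.A) ≫ ψ.app (M.toFunctor.obj A.A)) ≫
          M'.toFunctor.map (F.map A.a) := by rw [hnat]; simp
    _ = (F.map (M.η.app A.A) ≫ ψ.app A.A) ≫ σ'.app (F.obj A.A) ≫
          M'.toFunctor.map (S.φ.app A.A) ≫ M'.toFunctor.map (F.map A.a) := by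
        rw [h6]; simp
    _ = M'.η.app (F.obj A.A) ≫ σ'.app (F.obj A.A) ≫
          M'.toFunctor.map (S.φ.app A.A ≫ F.map A.a) := by rw [h5]; simp
end

section
/- (Doctrinal adjunction, right adjoints, in CAT.) Let (F, φ) : (C, M) → (C', M') be a lax monadic functor between categories with monads, and suppose F ⊣ G with unit u : 1_C ⟶ G ∘ F and counit c : F ∘ G ⟶ 1_{C'}. Then the following are equivalent: (i) φ is invertible; (ii) there exists a natural transformation ψ : M ∘ G ⟶ G ∘ M' making (G, ψ) a lax monadic functor (C', M') → (C, M) such that u is a monadic natural transformation from (1_C, id_M) to the composite (G∘F, (Gφ)∘(ψF)) and c is a monadic natural transformation from the composite (F∘G, (Fψ)∘(φG)) to (1_{C'}, id_{M'}). Moreover, when these hold, ψ is necessarily the mate of φ⁻¹, with component ψ_Y = G(M' c_Y) ∘ G(φ⁻¹_{G Y}) ∘ u_{M G Y}. -/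
open CategoryTheory

universe v₁ v₂ u₁ u₂

variable {C : Type u₁} [Category.{v₁} C] {D : Type u₂} [Category.{v₂} D]

/-- doctrinal adjunction, right adjoints: for a lax monadic functor
`(F, φ) : (C, M) → (C', M')` and an adjunction `F ⊣ G` with unit `u` and counit `c`, `φ` is
invertible if and only if there exists `ψ : M ∘ G ⟶ G ∘ M'` making `(G, ψ)` a lax monadic
functor such that `u` and `c` are monadic natural transformations; moreover `ψ` is then
necessarily the mate of `φ⁻¹`. -/
theorem doctrinal_right_adjoint (M : CategoryTheory.Monad C) (M' : CategoryTheory.Monad D)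
    (F : C ⥤ D) (S : MonadicStr M M' F) (G : D ⥤ C) (adj : F ⊣ G) :
    (IsIso S.φ ↔
      ∃ ψ : G ⋙ M.toFunctor ⟶ M'.toFunctor ⋙ G,
        -- `(G, ψ)` is a lax monadic functor `(C', M') → (C, M)`
        (∀ Y : D, M.η.app (G.obj Y) ≫ ψ.app Y = G.map (M'.η.app Y)) ∧
        (∀ Y : D, M.μ.app (G.obj Y) ≫ ψ.app Y =
          M.toFunctor.map (ψ.app Y) ≫ ψ.app (M'.toFunctor.obj Y) ≫ G.map (M'.μ.app Y)) ∧
        -- `u` is a monadic natural transformation `(1_C, id_M) ⟶ (G ∘ F, (Gφ) ∘ (ψF))`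
        (∀ X : C, adj.unit.app (M.toFunctor.obj X) =
          M.toFunctor.map (adj.unit.app X) ≫ ψ.app (F.obj X) ≫ G.map (S.φ.app X)) ∧
        -- `c` is a monadic natural transformation `(F ∘ G, (Fψ) ∘ (φG)) ⟶ (1_{C'}, id_{M'})`
        (∀ Y : D, S.φ.app (G.obj Y) ≫ F.map (ψ.app Y) ≫
            adj.counit.app (M'.toFunctor.obj Y) = M'.toFunctor.map (adj.counit.app Y))) ∧
    -- moreover, such a `ψ` is necessarily the mate of `φ⁻¹`
    (∀ (ψ : G ⋙ M.toFunctor ⟶ M'.toFunctor ⋙ G)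
      (_ : ∀ Y : D, M.η.app (G.obj Y) ≫ ψ.app Y = G.map (M'.η.app Y))
      (_ : ∀ Y : D, M.μ.app (G.obj Y) ≫ ψ.app Y =
        M.toFunctor.map (ψ.app Y) ≫ ψ.app (M'.toFunctor.obj Y) ≫ G.map (M'.μ.app Y))
      (_ : ∀ X : C, adj.unit.app (M.toFunctor.obj X) =
        M.toFunctor.map (adj.unit.app X) ≫ ψ.app (F.obj X) ≫ G.map (S.φ.app X))
      (_ : ∀ Y : D, S.φ.app (G.obj Y) ≫ F.map (ψ.app Y) ≫
        adj.counit.app (M'.toFunctor.obj Y) = M'.toFunctor.map (adj.counit.app Y))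
      (φinv : M.toFunctor ⋙ F ⟶ F ⋙ M'.toFunctor)
      (_ : S.φ ≫ φinv = 𝟙 (F ⋙ M'.toFunctor)) (_ : φinv ≫ S.φ = 𝟙 (M.toFunctor ⋙ F)),
      ∀ Y : D, ψ.app Y =
        adj.unit.app (M.toFunctor.obj (G.obj Y)) ≫ G.map (φinv.app (G.obj Y)) ≫
          G.map (M'.toFunctor.map (adj.counit.app Y))) := by
  -- naturality helpers for the unit and counit, stated with plain objects
  have hu : ∀ {X X' : C} (f : X ⟶ X'),
      f ≫ adj.unit.app X' = adj.unit.app X ≫ G.map (F.map f) := by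
    intro X X' f; simpa using adj.unit.naturality f
  have hc : ∀ {Y Y' : D} (f : Y ⟶ Y'),
      F.map (G.map f) ≫ adj.counit.app Y' = adj.counit.app Y ≫ f := by
    intro Y Y' f; simpa using adj.counit.naturality f
  have hη' : ∀ {Y Y' : D} (f : Y ⟶ Y'),
      f ≫ M'.η.app Y' = M'.η.app Y ≫ M'.toFunctor.map f := by
    intro Y Y' f; simpa using M'.η.naturality f
  have hμ' : ∀ {Y Y' : D} (f : Y ⟶ Y'),
      M'.toFunctor.map (M'.toFunctor.map f) ≫ M'.μ.app Y' = M'.μ.app Y ≫ M'.toFunctor.map f := by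
    intro Y Y' f; simpa using M'.μ.naturality f
  have htriL : ∀ X : C, F.map (adj.unit.app X) ≫ adj.counit.app (F.obj X) = 𝟙 (F.obj X) :=
    fun X => adj.left_triangle_components X
  have htriR : ∀ Y : D, adj.unit.app (G.obj Y) ≫ G.map (adj.counit.app Y) = 𝟙 (G.obj Y) :=
    fun Y => adj.right_triangle_components Y
  constructor
  · constructor
    · intro hiso
      set ι : M.toFunctor ⋙ F ⟶ F ⋙ M'.toFunctor := inv S.φ with hιdef
      have hφι : ∀ Z : C, S.φ.app Z ≫ ι.app Z = 𝟙 (M'.toFunctor.obj (F.obj Z)) := fun Z => by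
        rw [hιdef]; simp
      have hιφ : ∀ Z : C, ι.app Z ≫ S.φ.app Z = 𝟙 (F.obj (M.toFunctor.obj Z)) := fun Z => by
        rw [hιdef]; simp
      have hιnat : ∀ {Z Z' : C} (f : Z ⟶ Z'),
          F.map (M.toFunctor.map f) ≫ ι.app Z' = ι.app Z ≫ M'.toFunctor.map (F.map f) :=
        fun f => ι.naturality f
      -- inverted lax unit law
      have hunit' : ∀ Z : C, F.map (M.η.app Z) ≫ ι.app Z = M'.η.app (F.obj Z) := by
        intro Z
        rw [← S.lax_unit Z, Category.assoc, hφι]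
        simp
      -- inverted lax associativity law
      have hassoc' : ∀ Z : C, F.map (M.μ.app Z) ≫ ι.app Z =
          ι.app (M.toFunctor.obj Z) ≫ M'.toFunctor.map (ι.app Z) ≫ M'.μ.app (F.obj Z) := by
        intro Z
        haveI : IsIso (S.φ.app Z) := ⟨ι.app Z, hφι Z, hιφ Z⟩
        have hMιφ : M'.toFunctor.map (ι.app Z) ≫ M'.toFunctor.map (S.φ.app Z)
            = 𝟙 (M'.toFunctor.obj (F.obj (M.toFunctor.obj Z))) := by
          rw [← M'.toFunctor.map_comp, hιφ]; simp
        rw [← cancel_mono (S.φ.app Z)]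
        simp [S.lax_assoc Z, hιφ, reassoc_of% hιφ, reassoc_of% hMιφ]
      -- key fact: (F ψ_Y) ≫ c_{M'Y} = ι_{GY} ≫ M' c_Y
      have key : ∀ Y : D, F.map (adj.unit.app (M.toFunctor.obj (G.obj Y)) ≫ G.map (ι.app (G.obj Y)) ≫ G.map (M'.toFunctor.map (adj.counit.app Y))) ≫ adj.counit.app (M'.toFunctor.obj Y)
          = ι.app (G.obj Y) ≫ M'.toFunctor.map (adj.counit.app Y) := by
        intro Y
        simp only [F.map_comp, Category.assoc]
        rw [hc (Y := M'.toFunctor.obj (F.obj (G.obj Y))) (Y' := M'.toFunctor.obj Y)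
            (M'.toFunctor.map (adj.counit.app Y)),
          ← Category.assoc (F.map (G.map (ι.app (G.obj Y)))),
          hc (Y := F.obj (M.toFunctor.obj (G.obj Y)))
            (Y' := M'.toFunctor.obj (F.obj (G.obj Y))) (ι.app (G.obj Y)),
          Category.assoc, ← Category.assoc, ← Category.assoc,
          htriL (M.toFunctor.obj (G.obj Y))]
        simp
      -- the mate of φ⁻¹
      refine ⟨⟨fun Y => (adj.unit.app (M.toFunctor.obj (G.obj Y)) ≫ G.map (ι.app (G.obj Y)) ≫ G.map (M'.toFunctor.map (adj.counit.app Y))), ?_⟩, ?_, ?_, ?_, ?_⟩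
      · -- naturality of ψ
        intro Y Y' f
        have innerN : F.map (M.toFunctor.map (G.map f)) ≫ ι.app (G.obj Y') ≫
              M'.toFunctor.map (adj.counit.app Y')
            = ι.app (G.obj Y) ≫ M'.toFunctor.map (adj.counit.app Y) ≫ M'.toFunctor.map f := by
          rw [← Category.assoc, hιnat (G.map f), Category.assoc,
            ← M'.toFunctor.map_comp, hc f, M'.toFunctor.map_comp]
        dsimp only [Functor.comp_obj, Functor.comp_map]
        rw [← Category.assoc, hu (X := M.toFunctor.obj (G.obj Y))
          (X' := M.toFunctor.obj (G.obj Y')) (M.toFunctor.map (G.map f))]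
        simp only [Category.assoc, ← Functor.map_comp]
        rw [innerN]
        simp
      · -- lax unit for ψ
        intro Y
        have innerU : F.map (M.η.app (G.obj Y)) ≫ ι.app (G.obj Y) ≫
              M'.toFunctor.map (adj.counit.app Y)
            = adj.counit.app Y ≫ M'.η.app Y := by
          rw [← Category.assoc, hunit' (G.obj Y),
            ← hη' (Y := F.obj (G.obj Y)) (Y' := Y) (adj.counit.app Y)]
        dsimp only [Functor.comp_obj, Functor.comp_map]
        rw [← Category.assoc, hu (X := G.obj Y) (X' := M.toFunctor.obj (G.obj Y))
          (M.η.app (G.obj Y))]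
        simp only [Category.assoc, ← Functor.map_comp]
        rw [innerU, G.map_comp, ← Category.assoc, htriR Y]
        simp
      · -- lax associativity for ψ
        intro Y
        have innerA : F.map (M.μ.app (G.obj Y)) ≫ ι.app (G.obj Y) ≫
              M'.toFunctor.map (adj.counit.app Y)
            = ι.app (M.toFunctor.obj (G.obj Y)) ≫ M'.toFunctor.map (ι.app (G.obj Y)) ≫
              M'.toFunctor.map (M'.toFunctor.map (adj.counit.app Y)) ≫ M'.μ.app Y := by
          rw [← Category.assoc, hassoc' (G.obj Y)]
          simp only [Category.assoc]
          rw [← hμ' (Y := F.obj (G.obj Y)) (Y' := Y) (adj.counit.app Y)]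
        have innerR : F.map (M.toFunctor.map (adj.unit.app (M.toFunctor.obj (G.obj Y)) ≫ G.map (ι.app (G.obj Y)) ≫ G.map (M'.toFunctor.map (adj.counit.app Y)))) ≫
              ι.app (G.obj (M'.toFunctor.obj Y)) ≫
              M'.toFunctor.map (adj.counit.app (M'.toFunctor.obj Y)) ≫ M'.μ.app Y
            = ι.app (M.toFunctor.obj (G.obj Y)) ≫ M'.toFunctor.map (ι.app (G.obj Y)) ≫
              M'.toFunctor.map (M'.toFunctor.map (adj.counit.app Y)) ≫ M'.μ.app Y := by
          rw [← Category.assoc, hιnat (Z := M.toFunctor.obj (G.obj Y))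
            (Z' := G.obj (M'.toFunctor.obj Y)) (adj.unit.app (M.toFunctor.obj (G.obj Y)) ≫ G.map (ι.app (G.obj Y)) ≫ G.map (M'.toFunctor.map (adj.counit.app Y))), Category.assoc,
            ← Category.assoc (M'.toFunctor.map (F.map (adj.unit.app (M.toFunctor.obj (G.obj Y)) ≫ G.map (ι.app (G.obj Y)) ≫ G.map (M'.toFunctor.map (adj.counit.app Y))))),
            ← M'.toFunctor.map_comp, key Y, M'.toFunctor.map_comp]
          simp only [Category.assoc]
        have GinnerA : G.map (F.map (M.μ.app (G.obj Y))) ≫ G.map (ι.app (G.obj Y)) ≫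
              G.map (M'.toFunctor.map (adj.counit.app Y))
            = G.map (ι.app (M.toFunctor.obj (G.obj Y))) ≫
              G.map (M'.toFunctor.map (ι.app (G.obj Y))) ≫
              G.map (M'.toFunctor.map (M'.toFunctor.map (adj.counit.app Y))) ≫
              G.map (M'.μ.app Y) := by
          rw [← G.map_comp (ι.app (G.obj Y)) (M'.toFunctor.map (adj.counit.app Y)),
            ← G.map_comp (F.map (M.μ.app (G.obj Y))), innerA]
          simp only [Functor.map_comp, Category.assoc]
        have GinnerR : G.map (F.map (M.toFunctor.map (adj.unit.app (M.toFunctor.obj (G.obj Y)) ≫ G.map (ι.app (G.obj Y)) ≫ G.map (M'.toFunctor.map (adj.counit.app Y))))) ≫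
              G.map (ι.app (G.obj (M'.toFunctor.obj Y))) ≫
              G.map (M'.toFunctor.map (adj.counit.app (M'.toFunctor.obj Y))) ≫
              G.map (M'.μ.app Y)
            = G.map (ι.app (M.toFunctor.obj (G.obj Y))) ≫
              G.map (M'.toFunctor.map (ι.app (G.obj Y))) ≫
              G.map (M'.toFunctor.map (M'.toFunctor.map (adj.counit.app Y))) ≫
              G.map (M'.μ.app Y) := by
          rw [← G.map_comp (M'.toFunctor.map (adj.counit.app (M'.toFunctor.obj Y)))
              (M'.μ.app Y),
            ← G.map_comp (ι.app (G.obj (M'.toFunctor.obj Y))),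
            ← G.map_comp (F.map (M.toFunctor.map (adj.unit.app (M.toFunctor.obj (G.obj Y)) ≫ G.map (ι.app (G.obj Y)) ≫ G.map (M'.toFunctor.map (adj.counit.app Y))))), innerR]
          simp only [Functor.map_comp, Category.assoc]
        dsimp only [Functor.comp_obj, Functor.comp_map]
        simp only [Category.assoc]
        rw [← Category.assoc, hu (X := M.toFunctor.obj (M.toFunctor.obj (G.obj Y)))
          (X' := M.toFunctor.obj (G.obj Y)) (M.μ.app (G.obj Y)), Category.assoc]
        conv_rhs => rw [← Category.assoc,
          hu (X := M.toFunctor.obj (M.toFunctor.obj (G.obj Y)))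
            (X' := M.toFunctor.obj (G.obj (M'.toFunctor.obj Y)))
            (M.toFunctor.map (adj.unit.app (M.toFunctor.obj (G.obj Y)) ≫ G.map (ι.app (G.obj Y)) ≫ G.map (M'.toFunctor.map (adj.counit.app Y)))), Category.assoc]
        rw [GinnerA, GinnerR]
      · -- unit is monadic
        intro X
        have inner3 : F.map (M.toFunctor.map (adj.unit.app X)) ≫ ι.app (G.obj (F.obj X)) ≫
              M'.toFunctor.map (adj.counit.app (F.obj X)) ≫ S.φ.app X
            = 𝟙 (F.obj (M.toFunctor.obj X)) := by
          rw [← Category.assoc, hιnat (Z := X) (Z' := G.obj (F.obj X)) (adj.unit.app X),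
            Category.assoc,
            ← Category.assoc (M'.toFunctor.map (F.map (adj.unit.app X))),
            ← M'.toFunctor.map_comp, htriL X]
          simp [hιφ X]
        dsimp only [Functor.comp_obj, Functor.comp_map]
        symm
        simp only [Category.assoc]
        rw [← Category.assoc, hu (X := M.toFunctor.obj X)
          (X' := M.toFunctor.obj (G.obj (F.obj X))) (M.toFunctor.map (adj.unit.app X))]
        simp only [Category.assoc, ← Functor.map_comp]
        rw [inner3]
        simp
      · -- counit is monadic
        intro Y
        dsimp only [Functor.comp_obj, Functor.comp_map]
        rw [key Y, ← Category.assoc, hφι (G.obj Y)]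
        simp
    · rintro ⟨ψ, _, _, h3, h4⟩
      have hcomp : ∀ X : C, IsIso (S.φ.app X) := by
        intro X
        refine ⟨F.map (M.toFunctor.map (adj.unit.app X)) ≫ F.map (ψ.app (F.obj X)) ≫
          adj.counit.app (M'.toFunctor.obj (F.obj X)), ?_, ?_⟩
        · -- φ ≫ χ = 1
          have hnat : S.φ.app X ≫ F.map (M.toFunctor.map (adj.unit.app X))
              = M'.toFunctor.map (F.map (adj.unit.app X)) ≫ S.φ.app (G.obj (F.obj X)) :=
            (S.φ.naturality (adj.unit.app X)).symm
          rw [← Category.assoc, hnat, Category.assoc, h4 (F.obj X),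
            ← M'.toFunctor.map_comp, htriL X]
          simp
        · -- χ ≫ φ = 1
          have hnat : F.map (G.map (S.φ.app X)) ≫ adj.counit.app (F.obj (M.toFunctor.obj X))
              = adj.counit.app (M'.toFunctor.obj (F.obj X)) ≫ S.φ.app X :=
            hc (Y := M'.toFunctor.obj (F.obj X)) (Y' := F.obj (M.toFunctor.obj X))
              (S.φ.app X)
          rw [Category.assoc, Category.assoc, ← hnat]
          simp only [← Category.assoc]
          simp only [← F.map_comp]
          simp only [Category.assoc]
          rw [← h3 X, htriL (M.toFunctor.obj X)]
          rfl
      exact NatIso.isIso_of_isIso_app S.φ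
  · intro ψ _ _ _ h4 φinv hl hr Y
    have hinv : φinv.app (G.obj Y) ≫ S.φ.app (G.obj Y)
        = 𝟙 (F.obj (M.toFunctor.obj (G.obj Y))) := by
      simpa using congr_arg (fun t => NatTrans.app t (G.obj Y)) hr
    have hkey : φinv.app (G.obj Y) ≫ M'.toFunctor.map (adj.counit.app Y)
        = F.map (ψ.app Y) ≫ adj.counit.app (M'.toFunctor.obj Y) := by
      rw [← h4 Y, ← Category.assoc, hinv]
      simp
    rw [← G.map_comp, hkey, G.map_comp, ← Category.assoc,
      ← hu (X := M.toFunctor.obj (G.obj Y)) (X' := G.obj (M'.toFunctor.obj Y)) (ψ.app Y),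
      Category.assoc, htriR (M'.toFunctor.obj Y), Category.comp_id]
end

section
/- (Doctrinal adjunction, left adjoints, in CAT.) Let (G, ψ) : (C', M') → (C, M) be a lax monadic functor between categories with monads, and suppose G has a left adjoint F : C ⥤ C' with unit u : 1_C ⟶ G ∘ F and counit c : F ∘ G ⟶ 1_{C'}. Let φ' : F ∘ M ⟶ M' ∘ F be the mate of ψ, with component φ'_X = c_{M' F X} ∘ F(ψ_{F X}) ∘ F(M u_X). Then the following are equivalent: (i) φ' is invertible; (ii) there exists a natural transformation φ : M' ∘ F ⟶ F ∘ M making (F, φ) a lax monadic functor (C, M) → (C', M') such that u is a monadic natural transformation from (1_C, id_M) to the composite (G∘F, (Gφ)∘(ψF)) and c is a monadic natural transformation from the composite (F∘G, (Fψ)∘(φG)) to (1_{C'}, id_{M'}). Moreover, when these hold, necessarily φ = (φ')⁻¹, so (F, φ) is strong. -/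
open CategoryTheory

universe v₁ v₂ u₁ u₂

variable {C : Type u₁} [Category.{v₁} C] {D : Type u₂} [Category.{v₂} D]

/-- The mate `φ' : F ∘ M ⟶ M' ∘ F` of `ψ : M ∘ G ⟶ G ∘ M'` along an adjunction `F ⊣ G`;
its component at `X` is `c_{M' F X} ∘ F(ψ_{F X}) ∘ F(M u_X)`. -/
def MonadicStr.mate {M : CategoryTheory.Monad C} {M' : CategoryTheory.Monad D}
    {G : D ⥤ C} (S : MonadicStr M' M G) {F : C ⥤ D} (adj : F ⊣ G) :
    M.toFunctor ⋙ F ⟶ F ⋙ M'.toFunctor :=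
  Functor.whiskerRight (Functor.whiskerRight adj.unit M.toFunctor) F ≫
    Functor.whiskerRight (Functor.whiskerLeft F S.φ) F ≫ Functor.whiskerLeft (F ⋙ M'.toFunctor) adj.counit

section Aux

variable {M : CategoryTheory.Monad C} {M' : CategoryTheory.Monad D}
  {G : D ⥤ C} (S : MonadicStr M' M G) {F : C ⥤ D} (adj : F ⊣ G)

lemma mate_app (X : C) : (S.mate adj).app X =
    F.map (M.toFunctor.map (adj.unit.app X)) ≫ F.map (S.φ.app (F.obj X)) ≫
      adj.counit.app (M'.toFunctor.obj (F.obj X)) := by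
  simp [MonadicStr.mate]

/-- Transposition property of the mate. -/
lemma mate_transpose (X : C) :
    adj.unit.app (M.toFunctor.obj X) ≫ G.map ((S.mate adj).app X) =
      M.toFunctor.map (adj.unit.app X) ≫ S.φ.app (F.obj X) := by
  have h := adj.unit.naturality (M.toFunctor.map (adj.unit.app X) ≫ S.φ.app (F.obj X))
  simp only [Functor.id_map, Functor.comp_map, Functor.comp_obj, Functor.id_obj] at h
  calc adj.unit.app (M.toFunctor.obj X) ≫ G.map ((S.mate adj).app X)
      = adj.unit.app (M.toFunctor.obj X) ≫
          G.map (F.map (M.toFunctor.map (adj.unit.app X) ≫ S.φ.app (F.obj X))) ≫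
          G.map (adj.counit.app (M'.toFunctor.obj (F.obj X))) := by
        simp [mate_app, G.map_comp]
    _ = ((M.toFunctor.map (adj.unit.app X) ≫ S.φ.app (F.obj X)) ≫
          adj.unit.app (G.obj (M'.toFunctor.obj (F.obj X)))) ≫
          G.map (adj.counit.app (M'.toFunctor.obj (F.obj X))) := by
        rw [← Category.assoc, h]
    _ = M.toFunctor.map (adj.unit.app X) ≫ S.φ.app (F.obj X) := by
        simp [adj.right_triangle_components]

/-- The other transposition property of the mate. -/
lemma mate_transpose' (Y : D) :
    F.map (S.φ.app Y) ≫ adj.counit.app (M'.toFunctor.obj Y) =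
      (S.mate adj).app (G.obj Y) ≫ M'.toFunctor.map (adj.counit.app Y) := by
  have hc := adj.counit.naturality (M'.toFunctor.map (adj.counit.app Y))
  simp only [Functor.id_map, Functor.comp_map, Functor.comp_obj, Functor.id_obj] at hc
  have hn := S.φ.naturality (adj.counit.app Y)
  simp only [Functor.comp_map, Functor.comp_obj, Functor.id_obj] at hn
  calc F.map (S.φ.app Y) ≫ adj.counit.app (M'.toFunctor.obj Y)
      = F.map (M.toFunctor.map (adj.unit.app (G.obj Y))) ≫
          F.map (M.toFunctor.map (G.map (adj.counit.app Y)) ≫ S.φ.app Y) ≫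
          adj.counit.app (M'.toFunctor.obj Y) := by
        rw [← F.map_comp_assoc, ← M.toFunctor.map_comp_assoc,
          adj.right_triangle_components]
        simp
    _ = F.map (M.toFunctor.map (adj.unit.app (G.obj Y))) ≫
          F.map (S.φ.app (F.obj (G.obj Y))) ≫
          F.map (G.map (M'.toFunctor.map (adj.counit.app Y))) ≫
          adj.counit.app (M'.toFunctor.obj Y) := by
        rw [hn]; simp
    _ = (S.mate adj).app (G.obj Y) ≫ M'.toFunctor.map (adj.counit.app Y) := by
        rw [hc]; simp [mate_app]

/-- The mate is colax-unital. -/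
lemma mate_colax_unit (X : C) :
    F.map (M.η.app X) ≫ (S.mate adj).app X = M'.η.app (F.obj X) := by
  have hη := M.η.naturality (adj.unit.app X)
  simp only [Functor.id_map, Functor.comp_obj, Functor.id_obj] at hη
  calc F.map (M.η.app X) ≫ (S.mate adj).app X
      = F.map (M.η.app X ≫ M.toFunctor.map (adj.unit.app X)) ≫ F.map (S.φ.app (F.obj X)) ≫
          adj.counit.app (M'.toFunctor.obj (F.obj X)) := by simp [mate_app]
    _ = F.map (adj.unit.app X) ≫
          F.map (M.η.app (G.obj (F.obj X)) ≫ S.φ.app (F.obj X)) ≫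
          adj.counit.app (M'.toFunctor.obj (F.obj X)) := by rw [← hη]; simp
    _ = F.map (adj.unit.app X) ≫ F.map (G.map (M'.η.app (F.obj X))) ≫
          adj.counit.app (M'.toFunctor.obj (F.obj X)) := by rw [S.lax_unit]
    _ = F.map (adj.unit.app X) ≫ adj.counit.app (F.obj X) ≫ M'.η.app (F.obj X) := by
        have hc := adj.counit.naturality (M'.η.app (F.obj X))
        simp only [Functor.id_map, Functor.comp_map, Functor.comp_obj, Functor.id_obj] at hc
        rw [← hc]
    _ = M'.η.app (F.obj X) := by
        rw [← Category.assoc]; simp [adj.left_triangle_components]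

/-- The mate is colax-associative. -/
lemma mate_colax_assoc (X : C) :
    F.map (M.μ.app X) ≫ (S.mate adj).app X =
      (S.mate adj).app (M.toFunctor.obj X) ≫ M'.toFunctor.map ((S.mate adj).app X) ≫
        M'.μ.app (F.obj X) := by
  have hc1 := adj.counit.naturality (M'.toFunctor.map ((S.mate adj).app X))
  simp only [Functor.id_map, Functor.comp_map, Functor.comp_obj, Functor.id_obj] at hc1
  have hc1r := reassoc_of% hc1
  have hc2 := adj.counit.naturality (M'.μ.app (F.obj X))
  simp only [Functor.id_map, Functor.comp_map, Functor.comp_obj, Functor.id_obj] at hc2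
  have hn := S.φ.naturality ((S.mate adj).app X)
  simp only [Functor.comp_map, Functor.comp_obj, Functor.id_obj] at hn
  have hμ := M.μ.naturality (adj.unit.app X)
  simp only [Functor.id_map, Functor.comp_map, Functor.comp_obj, Functor.id_obj] at hμ
  have inner : M.toFunctor.map (adj.unit.app (M.toFunctor.obj X)) ≫
      S.φ.app (F.obj (M.toFunctor.obj X)) ≫
      G.map (M'.toFunctor.map ((S.mate adj).app X)) ≫ G.map (M'.μ.app (F.obj X)) =
      M.μ.app X ≫ M.toFunctor.map (adj.unit.app X) ≫ S.φ.app (F.obj X) := by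
    rw [← Category.assoc (S.φ.app _), ← hn]
    simp only [Category.assoc]
    rw [← M.toFunctor.map_comp_assoc, mate_transpose S adj X,
      M.toFunctor.map_comp, Category.assoc, ← S.lax_assoc (F.obj X),
      ← Category.assoc, hμ, Category.assoc]
  calc F.map (M.μ.app X) ≫ (S.mate adj).app X
      = F.map (M.μ.app X ≫ M.toFunctor.map (adj.unit.app X) ≫ S.φ.app (F.obj X)) ≫
          adj.counit.app (M'.toFunctor.obj (F.obj X)) := by
        rw [mate_app]; simp
    _ = F.map (M.toFunctor.map (adj.unit.app (M.toFunctor.obj X)) ≫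
          S.φ.app (F.obj (M.toFunctor.obj X)) ≫
          G.map (M'.toFunctor.map ((S.mate adj).app X)) ≫ G.map (M'.μ.app (F.obj X))) ≫
          adj.counit.app (M'.toFunctor.obj (F.obj X)) := by rw [inner]
    _ = (S.mate adj).app (M.toFunctor.obj X) ≫ M'.toFunctor.map ((S.mate adj).app X) ≫
          M'.μ.app (F.obj X) := by
        simp only [F.map_comp, Category.assoc]
        rw [hc2, hc1r]
        simp [mate_app]

/-- Any `φ` satisfying the two monadic-transformation conditions is inverse to the mate. -/
lemma mate_inverse (φ : F ⋙ M'.toFunctor ⟶ M.toFunctor ⋙ F)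
    (h3 : ∀ X : C, adj.unit.app (M.toFunctor.obj X) =
      M.toFunctor.map (adj.unit.app X) ≫ S.φ.app (F.obj X) ≫ G.map (φ.app X))
    (h4 : ∀ Y : D, φ.app (G.obj Y) ≫ F.map (S.φ.app Y) ≫
      adj.counit.app (M'.toFunctor.obj Y) = M'.toFunctor.map (adj.counit.app Y)) :
    φ ≫ S.mate adj = 𝟙 (F ⋙ M'.toFunctor) ∧
      S.mate adj ≫ φ = 𝟙 (M.toFunctor ⋙ F) := by
  constructor
  · ext X
    have hn := φ.naturality (adj.unit.app X)
    simp only [Functor.comp_map, Functor.comp_obj, Functor.id_obj] at hn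
    simp only [NatTrans.comp_app, NatTrans.id_app, mate_app]
    calc φ.app X ≫ F.map (M.toFunctor.map (adj.unit.app X)) ≫ F.map (S.φ.app (F.obj X)) ≫
          adj.counit.app (M'.toFunctor.obj (F.obj X))
        = M'.toFunctor.map (F.map (adj.unit.app X)) ≫ φ.app (G.obj (F.obj X)) ≫
            F.map (S.φ.app (F.obj X)) ≫
            adj.counit.app (M'.toFunctor.obj (F.obj X)) := by
          rw [← Category.assoc, ← hn]; simp
      _ = M'.toFunctor.map (F.map (adj.unit.app X)) ≫
            M'.toFunctor.map (adj.counit.app (F.obj X)) := by rw [h4]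
      _ = 𝟙 _ := by
          rw [← M'.toFunctor.map_comp]; simp [adj.left_triangle_components]
  · ext X
    have hc := adj.counit.naturality (φ.app X)
    simp only [Functor.id_map, Functor.comp_map, Functor.comp_obj, Functor.id_obj] at hc
    simp only [NatTrans.comp_app, NatTrans.id_app, mate_app, Category.assoc]
    calc F.map (M.toFunctor.map (adj.unit.app X)) ≫ F.map (S.φ.app (F.obj X)) ≫
          adj.counit.app (M'.toFunctor.obj (F.obj X)) ≫ φ.app X
        = F.map (M.toFunctor.map (adj.unit.app X) ≫ S.φ.app (F.obj X) ≫ G.map (φ.app X)) ≫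
            adj.counit.app (F.obj (M.toFunctor.obj X)) := by
          rw [← hc]; simp
      _ = F.map (adj.unit.app (M.toFunctor.obj X)) ≫
            adj.counit.app (F.obj (M.toFunctor.obj X)) := by rw [← h3]
      _ = 𝟙 _ := adj.left_triangle_components _

end Aux

/-- doctrinal adjunction, left adjoints: for a lax monadic functor
`(G, ψ) : (C', M') → (C, M)` and an adjunction `F ⊣ G` with unit `u` and counit `c`, the mate
`φ'` of `ψ` is invertible if and only if there exists `φ : M' ∘ F ⟶ F ∘ M` making `(F, φ)` a
lax monadic functor such that `u` and `c` are monadic natural transformations; moreover such a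
`φ` is necessarily the inverse of `φ'`, so `(F, φ)` is strong. -/
theorem doctrinal_left_adjoint (M : CategoryTheory.Monad C) (M' : CategoryTheory.Monad D)
    (G : D ⥤ C) (S : MonadicStr M' M G) (F : C ⥤ D) (adj : F ⊣ G) :
    (IsIso (S.mate adj) ↔
      ∃ φ : F ⋙ M'.toFunctor ⟶ M.toFunctor ⋙ F,
        -- `(F, φ)` is a lax monadic functor `(C, M) → (C', M')`
        (∀ X : C, M'.η.app (F.obj X) ≫ φ.app X = F.map (M.η.app X)) ∧
        (∀ X : C, M'.μ.app (F.obj X) ≫ φ.app X =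
          M'.toFunctor.map (φ.app X) ≫ φ.app (M.toFunctor.obj X) ≫ F.map (M.μ.app X)) ∧
        -- `u` is a monadic natural transformation `(1_C, id_M) ⟶ (G ∘ F, (Gφ) ∘ (ψF))`
        (∀ X : C, adj.unit.app (M.toFunctor.obj X) =
          M.toFunctor.map (adj.unit.app X) ≫ S.φ.app (F.obj X) ≫ G.map (φ.app X)) ∧
        -- `c` is a monadic natural transformation `(F ∘ G, (Fψ) ∘ (φG)) ⟶ (1_{C'}, id_{M'})`
        (∀ Y : D, φ.app (G.obj Y) ≫ F.map (S.φ.app Y) ≫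
          adj.counit.app (M'.toFunctor.obj Y) = M'.toFunctor.map (adj.counit.app Y))) ∧
    -- moreover, such a `φ` is necessarily the inverse of the mate `φ'`, so `(F, φ)` is strong
    (∀ (φ : F ⋙ M'.toFunctor ⟶ M.toFunctor ⋙ F)
      (_ : ∀ X : C, M'.η.app (F.obj X) ≫ φ.app X = F.map (M.η.app X))
      (_ : ∀ X : C, M'.μ.app (F.obj X) ≫ φ.app X =
        M'.toFunctor.map (φ.app X) ≫ φ.app (M.toFunctor.obj X) ≫ F.map (M.μ.app X))
      (_ : ∀ X : C, adj.unit.app (M.toFunctor.obj X) =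
        M.toFunctor.map (adj.unit.app X) ≫ S.φ.app (F.obj X) ≫ G.map (φ.app X))
      (_ : ∀ Y : D, φ.app (G.obj Y) ≫ F.map (S.φ.app Y) ≫
        adj.counit.app (M'.toFunctor.obj Y) = M'.toFunctor.map (adj.counit.app Y)),
      φ ≫ S.mate adj = 𝟙 (F ⋙ M'.toFunctor) ∧
        S.mate adj ≫ φ = 𝟙 (M.toFunctor ⋙ F)) := by
  refine ⟨⟨?_, ?_⟩, fun φ _ _ h3 h4 => mate_inverse S adj φ h3 h4⟩
  · intro h
    refine ⟨inv (S.mate adj), ?_, ?_, ?_, ?_⟩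
    · intro X
      have hi := NatTrans.congr_app (IsIso.hom_inv_id (S.mate adj)) X
      simp only [NatTrans.comp_app, NatTrans.id_app] at hi
      rw [← mate_colax_unit S adj X, Category.assoc, hi]; simp
    · intro X
      have : IsIso ((S.mate adj).app X) := inferInstance
      rw [← cancel_mono ((S.mate adj).app X)]
      have hiX := NatTrans.congr_app (IsIso.inv_hom_id (S.mate adj)) X
      have hiX' := NatTrans.congr_app (IsIso.inv_hom_id (S.mate adj)) (M.toFunctor.obj X)
      simp only [NatTrans.comp_app, NatTrans.id_app] at hiX hiX'
      calc (M'.μ.app (F.obj X) ≫ (inv (S.mate adj)).app X) ≫ (S.mate adj).app X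
          = M'.μ.app (F.obj X) := by rw [Category.assoc, hiX]; simp
        _ = (M'.toFunctor.map ((inv (S.mate adj)).app X) ≫
              M'.toFunctor.map ((S.mate adj).app X)) ≫ M'.μ.app (F.obj X) := by
            rw [← M'.toFunctor.map_comp, hiX]; simp
        _ = M'.toFunctor.map ((inv (S.mate adj)).app X) ≫
              (inv (S.mate adj)).app (M.toFunctor.obj X) ≫
              ((S.mate adj).app (M.toFunctor.obj X) ≫
                M'.toFunctor.map ((S.mate adj).app X) ≫ M'.μ.app (F.obj X)) := by
            rw [← Category.assoc ((inv (S.mate adj)).app _), hiX']; simp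
        _ = (M'.toFunctor.map ((inv (S.mate adj)).app X) ≫
              (inv (S.mate adj)).app (M.toFunctor.obj X) ≫ F.map (M.μ.app X)) ≫
              (S.mate adj).app X := by
            rw [← mate_colax_assoc S adj X]; simp
    · intro X
      have hi := NatTrans.congr_app (IsIso.hom_inv_id (S.mate adj)) X
      simp only [NatTrans.comp_app, NatTrans.id_app] at hi
      rw [← Category.assoc, ← mate_transpose S adj X, Category.assoc, ← G.map_comp, hi]
      simp
    · intro Y
      have hi := NatTrans.congr_app (IsIso.inv_hom_id (S.mate adj)) (G.obj Y)
      simp only [NatTrans.comp_app, NatTrans.id_app] at hi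
      rw [mate_transpose' S adj Y, ← Category.assoc, hi, Category.id_comp]
  · rintro ⟨φ, _, _, h3, h4⟩
    obtain ⟨hl, hr⟩ := mate_inverse S adj φ h3 h4
    exact ⟨φ, hr, hl⟩
end
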